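/- Let N_λ be Poisson with parameter λ > 0 and ζ ~ N(0,1) independent of N_λ. Then for σ > 0, the Wasserstein distance between the law of σ√(N_λ/λ)·ζ and N(0,σ²) is at most σ√(2/π)/√λ. -/

import Mathlib

open MeasureTheory ProbabilityTheory Real
open scoped ENNReal NNReal

lemma ioi_int : ∫ x in Set.Ioi (0:ℝ), x * Real.exp (-(x^2/2)) = 1 := by
  have := integral_Ioi_of_hasDerivAt_of_tendsto (f := fun x : ℝ => -Real.exp (-(x^2/2)))
    (f' := fun x : ℝ => x * Real.exp (-(x^2/2))) (a := 0) (m := 0) ?_ ?_ ?_ ?_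
  · simpa using this
  · exact ((by fun_prop : Continuous fun x : ℝ => -Real.exp (-(x^2/2))).continuousWithinAt)
  · intro x hx
    have : HasDerivAt (fun x : ℝ => -(x^2/2)) (-x) x := by
      have := ((hasDerivAt_pow 2 x).div_const 2).neg
      simp at this
      exact this
    have := this.exp.neg
    simp [mul_comm] at this
    exact this
  · have : IntegrableOn (fun x : ℝ => x * Real.exp (-(2⁻¹) * x^2)) (Set.Ioi 0) :=
      (integrable_mul_exp_neg_mul_sq (by norm_num)).integrableOn
    simpa [neg_div, div_eq_inv_mul, mul_comm] using this
  · have h2 : Filter.Tendsto (fun x : ℝ => x^2/2) Filter.atTop Filter.atTop :=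
      (Filter.tendsto_pow_atTop (n := 2) (by norm_num)).atTop_div_const (by norm_num)
    have h := tendsto_exp_neg_atTop_nhds_zero.comp h2
    simpa [Function.comp] using h.neg

lemma pdf_abs_integrable : Integrable (fun x : ℝ => |x| * Real.exp (-(x^2/2))) := by
  have : Integrable (fun x : ℝ => |x * Real.exp (-(2⁻¹) * x^2)|) :=
    (integrable_mul_exp_neg_mul_sq (by norm_num)).abs
  have heq : (fun x : ℝ => |x * Real.exp (-(2⁻¹) * x^2)|) = fun x => |x| * Real.exp (-(x^2/2)) := by
    ext x
    rw [abs_mul, abs_of_pos (Real.exp_pos _)]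
    ring_nf
  rwa [heq] at this

lemma pdf_rw (x : ℝ) : gaussianPDFReal 0 1 x = (Real.sqrt (2*π))⁻¹ * Real.exp (-(x^2/2)) := by
  rw [gaussianPDFReal_def]
  norm_num
  left
  ring

lemma gauss_abs_integrable : Integrable (fun x : ℝ => |x|) (gaussianReal 0 1) := by
  rw [gaussianReal_of_var_ne_zero _ one_ne_zero, gaussianPDF_def,
    integrable_withDensity_iff (measurable_gaussianPDFReal 0 1).ennreal_ofReal
      (Filter.Eventually.of_forall fun x => ENNReal.ofReal_lt_top)]
  have : (fun x : ℝ => |x| * (ENNReal.ofReal (gaussianPDFReal 0 1 x)).toReal)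
      = fun x => (Real.sqrt (2*π))⁻¹ * (|x| * Real.exp (-(x^2/2))) := by
    ext x
    rw [ENNReal.toReal_ofReal (gaussianPDFReal_nonneg 0 1 x), pdf_rw]
    ring
  rw [this]
  exact pdf_abs_integrable.const_mul _

lemma gauss_abs_moment : ∫ x, |x| ∂(gaussianReal 0 1) = Real.sqrt (2/π) := by
  rw [gaussianReal_of_var_ne_zero _ one_ne_zero, gaussianPDF_def]
  have h1 : ∀ x : ℝ, ENNReal.ofReal (gaussianPDFReal 0 1 x)
      = ((gaussianPDFReal 0 1 x).toNNReal : ℝ≥0∞) := fun x => rfl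
  simp_rw [h1]
  rw [integral_withDensity_eq_integral_smul (Measurable.real_toNNReal (measurable_gaussianPDFReal 0 1))]
  have h2 : (fun x : ℝ => (gaussianPDFReal 0 1 x).toNNReal • |x|)
      = fun x : ℝ => (Real.sqrt (2*π))⁻¹ * (|x| * Real.exp (-(|x|^2/2))) := by
    ext x
    rw [NNReal.smul_def, smul_eq_mul, Real.coe_toNNReal _ (gaussianPDFReal_nonneg 0 1 x), pdf_rw,
      sq_abs]
    ring
  rw [h2, integral_const_mul, integral_comp_abs (f := fun x => x * Real.exp (-(x^2/2))), ioi_int]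
  have hπ : (0:ℝ) < π := Real.pi_pos
  rw [mul_one]
  have hmm : Real.sqrt (2/π) * Real.sqrt (2*π) = 2 := by
    rw [← Real.sqrt_mul (by positivity)]
    rw [show (2/π)*(2*π) = 2^2 by field_simp]
    exact Real.sqrt_sq (by norm_num)
  have hpos : (0:ℝ) < Real.sqrt (2*π) := Real.sqrt_pos.mpr (by positivity)
  rw [inv_mul_eq_div, div_eq_iff hpos.ne']
  exact hmm.symm

lemma nat_lintegral {Ω : Type*} [MeasureSpace Ω] [IsProbabilityMeasure (ℙ : Measure Ω)]
    (N : Ω → ℕ) (hNmeas : Measurable N) (p : ℕ → ℝ)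
    (hp : ∀ n : ℕ, (ℙ {ω | N ω = n}).toReal = p n)
    (f : ℕ → ℝ) (hf : ∀ n, 0 ≤ f n) {s : ℝ} (hsum : HasSum (fun n => f n * p n) s) :
    ∫⁻ ω, ENNReal.ofReal (f (N ω)) ∂ℙ = ENNReal.ofReal s := by
  have hmeasn : ∀ n, (ℙ : Measure Ω) {ω | N ω = n} = ENNReal.ofReal (p n) := fun n => by
    rw [← hp n, ENNReal.ofReal_toReal (measure_ne_top _ _)]
  have hpn : ∀ n, 0 ≤ p n := fun n => hp n ▸ ENNReal.toReal_nonneg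
  rw [← lintegral_map (f := fun n : ℕ => ENNReal.ofReal (f n)) (by fun_prop) hNmeas, lintegral_countable' (fun n => ENNReal.ofReal (f n))]
  have key : ∀ n : ℕ, ENNReal.ofReal (f n) * (Measure.map N ℙ) {n}
      = ENNReal.ofReal (f n * p n) := by
    intro n
    rw [Measure.map_apply hNmeas (measurableSet_singleton n),
      show N ⁻¹' {n} = {ω | N ω = n} from rfl, hmeasn n,
      ENNReal.ofReal_mul (hf n)]
  simp_rw [key]
  rw [← ENNReal.ofReal_tsum_of_nonneg (fun n => mul_nonneg (hf n) (hpn n)) hsum.summable,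
    hsum.tsum_eq]

lemma nat_integrable {Ω : Type*} [MeasureSpace Ω] [IsProbabilityMeasure (ℙ : Measure Ω)]
    (N : Ω → ℕ) (hNmeas : Measurable N) (p : ℕ → ℝ)
    (hp : ∀ n : ℕ, (ℙ {ω | N ω = n}).toReal = p n)
    (f : ℕ → ℝ) (hf : ∀ n, 0 ≤ f n) {s : ℝ} (hsum : HasSum (fun n => f n * p n) s) :
    Integrable (fun ω => f (N ω)) ℙ := by
  refine ⟨(Measurable.comp (by fun_prop) hNmeas).aestronglyMeasurable, ?_⟩
  rw [HasFiniteIntegral]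
  have : ∀ ω, ‖f (N ω)‖ₑ = ENNReal.ofReal (f (N ω)) := fun ω => by
    rw [← ofReal_norm, Real.norm_of_nonneg (hf _)]
  simp_rw [this, nat_lintegral N hNmeas p hp f hf hsum]
  exact ENNReal.ofReal_lt_top

lemma nat_integral {Ω : Type*} [MeasureSpace Ω] [IsProbabilityMeasure (ℙ : Measure Ω)]
    (N : Ω → ℕ) (hNmeas : Measurable N) (p : ℕ → ℝ)
    (hp : ∀ n : ℕ, (ℙ {ω | N ω = n}).toReal = p n)
    (f : ℕ → ℝ) (hf : ∀ n, 0 ≤ f n) {s : ℝ} (hsum : HasSum (fun n => f n * p n) s) :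
    ∫ ω, f (N ω) ∂ℙ = s := by
  have hpn : ∀ n, 0 ≤ p n := fun n => hp n ▸ ENNReal.toReal_nonneg
  have hs : 0 ≤ s := hsum.nonneg (fun n => mul_nonneg (hf n) (hpn n))
  rw [integral_eq_lintegral_of_nonneg_ae (Filter.Eventually.of_forall fun ω => hf _)
    (Measurable.comp (by fun_prop) hNmeas).aestronglyMeasurable,
    nat_lintegral N hNmeas p hp f hf hsum, ENNReal.toReal_ofReal hs]

section poisson
variable {lam : ℝ}

noncomputable def pp (lam : ℝ) (n : ℕ) : ℝ := Real.exp (-lam) * lam ^ n / n.factorial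

lemma pp_sum (hlam : 0 < lam) : HasSum (pp lam) 1 := by
  have h := poissonPMFRealSum lam.toNNReal
  have hc : (lam.toNNReal : ℝ) = lam := Real.coe_toNNReal _ hlam.le
  unfold poissonPMFReal at h
  rw [hc] at h
  exact h

lemma pp_sum_mul (hlam : 0 < lam) : HasSum (fun n : ℕ => (n : ℝ) * pp lam n) lam := by
  have h := (pp_sum hlam).mul_left lam
  have key : (fun n : ℕ => ((n + 1 : ℕ) : ℝ) * pp lam (n + 1)) = fun n => lam * pp lam n := by
    ext n
    unfold pp
    have hfac : ((n + 1).factorial : ℝ) = (n + 1) * n.factorial := by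
      push_cast [Nat.factorial_succ]; ring
    rw [hfac, pow_succ]
    have h1 : (n.factorial : ℝ) ≠ 0 := Nat.cast_ne_zero.mpr n.factorial_ne_zero
    have h2 : ((n : ℝ) + 1) ≠ 0 := by positivity
    field_simp
    push_cast
    ring
  rw [← key] at h
  have := (hasSum_nat_add_iff (f := fun n : ℕ => (n : ℝ) * pp lam n) 1).mp h
  simpa using this

lemma pp_sum_mul2 (hlam : 0 < lam) : HasSum (fun n : ℕ => (n : ℝ) * ((n : ℝ) - 1) * pp lam n) (lam ^ 2) := by
  have h := (pp_sum hlam).mul_left (lam ^ 2)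
  have key : (fun n : ℕ => ((n + 2 : ℕ) : ℝ) * (((n + 2 : ℕ) : ℝ) - 1) * pp lam (n + 2))
      = fun n => lam ^ 2 * pp lam n := by
    ext n
    unfold pp
    have hfac : ((n + 2).factorial : ℝ) = (n + 2) * ((n + 1) * n.factorial) := by
      push_cast [Nat.factorial_succ]; ring
    have h1 : (n.factorial : ℝ) ≠ 0 := Nat.cast_ne_zero.mpr n.factorial_ne_zero
    have h2 : ((n : ℝ) + 1) ≠ 0 := by positivity
    have h3 : ((n : ℝ) + 2) ≠ 0 := by positivity
    rw [hfac]
    push_cast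
    rw [show lam ^ (n + 2) = lam ^ n * lam ^ 2 by ring]
    field_simp
    ring
  rw [← key] at h
  have := (hasSum_nat_add_iff (f := fun n : ℕ => (n : ℝ) * ((n : ℝ) - 1) * pp lam n) 2).mp h
  simpa [Finset.sum_range_succ] using this

lemma pp_sum_var (hlam : 0 < lam) : HasSum (fun n : ℕ => ((n : ℝ) / lam - 1) ^ 2 * pp lam n) (1 / lam) := by
  have h2 := ((pp_sum_mul2 hlam).add (pp_sum_mul hlam)).mul_left (1 / lam ^ 2)
  have h1 := (pp_sum_mul hlam).mul_left (2 / lam)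
  have h0 := pp_sum hlam
  have h := (h2.sub h1).add h0
  have key : (fun n : ℕ => 1 / lam ^ 2 * ((n : ℝ) * ((n : ℝ) - 1) * pp lam n + (n : ℝ) * pp lam n)
      - 2 / lam * ((n : ℝ) * pp lam n) + pp lam n)
      = fun n : ℕ => ((n : ℝ) / lam - 1) ^ 2 * pp lam n := by
    ext n
    have : lam ≠ 0 := hlam.ne'
    field_simp
    ring
  rw [key] at h
  have hval : 1 / lam ^ 2 * (lam ^ 2 + lam) - 2 / lam * lam + 1 = 1 / lam := by
    have : lam ≠ 0 := hlam.ne'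
    field_simp
    ring
  rwa [hval] at h

end poisson

/-- If `N_λ ~ Poi(λ)` with `λ > 0` and `ζ ~ N(0,1)` is independent of `N_λ`, then for
`σ > 0` the Wasserstein distance between the law of `σ√(N_λ/λ) ζ` and `N(0,σ²)` is at
most `σ √(2/π) / √λ`. -/
theorem stmt_17 {Ω : Type*} [MeasureSpace Ω] [IsProbabilityMeasure (ℙ : Measure Ω)]
    (lam : ℝ) (hlam : 0 < lam)
    (N : Ω → ℕ) (ζ : Ω → ℝ) (hNmeas : Measurable N) (hζmeas : Measurable ζ)
    (hN : ∀ n : ℕ, (ℙ {ω | N ω = n}).toReal = Real.exp (-lam) * lam ^ n / n.factorial)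
    (hζ : Measure.map ζ ℙ = gaussianReal 0 1)
    (hindep : IndepFun N ζ ℙ)
    (σ : ℝ) (hσ : 0 < σ) :
    ∀ h : ℝ → ℝ, LipschitzWith 1 h →
      |(∫ ω, h (σ * Real.sqrt ((N ω : ℝ) / lam) * ζ ω) ∂ℙ) -
          ∫ x, h x ∂(gaussianReal 0 ⟨σ ^ 2, sq_nonneg σ⟩)| ≤
        σ * Real.sqrt (2 / Real.pi) / Real.sqrt lam := by
  intro h hLip
  have hp : ∀ n : ℕ, (ℙ {ω | N ω = n}).toReal = pp lam n := fun n => hN n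
  set sl := Real.sqrt lam with hsldef
  have hsl : 0 < sl := Real.sqrt_pos.mpr hlam
  have hslsq : sl * sl = lam := Real.mul_self_sqrt hlam.le
  -- variance integral
  have hvar_f_nonneg : ∀ n : ℕ, 0 ≤ ((n : ℝ) / lam - 1) ^ 2 := fun n => sq_nonneg _
  have hvar_int : Integrable (fun ω => ((N ω : ℝ) / lam - 1) ^ 2) ℙ :=
    nat_integrable N hNmeas _ hp _ hvar_f_nonneg (pp_sum_var hlam)
  have hvar_val : ∫ ω, ((N ω : ℝ) / lam - 1) ^ 2 ∂ℙ = 1 / lam :=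
    nat_integral N hNmeas _ hp _ hvar_f_nonneg (pp_sum_var hlam)
  -- the absolute deviation of the sqrt
  set gab : ℕ → ℝ := fun n => |Real.sqrt ((n : ℝ) / lam) - 1| with hgabdef
  have hgab_sq : ∀ n : ℕ, gab n ^ 2 ≤ ((n : ℝ) / lam - 1) ^ 2 := by
    intro n
    have hx : (0 : ℝ) ≤ (n : ℝ) / lam := by positivity
    have hs : Real.sqrt ((n : ℝ) / lam) ^ 2 = (n : ℝ) / lam := Real.sq_sqrt hx
    have hsnn : 0 ≤ Real.sqrt ((n : ℝ) / lam) := Real.sqrt_nonneg _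
    have : gab n ^ 2 = (Real.sqrt ((n : ℝ) / lam) - 1) ^ 2 := sq_abs _
    rw [this]
    nlinarith [sq_nonneg (Real.sqrt ((n : ℝ) / lam) - 1),
      sq_nonneg (Real.sqrt ((n : ℝ) / lam) + 1),
      sq_nonneg (Real.sqrt ((n : ℝ) / lam) * (Real.sqrt ((n : ℝ) / lam) - 1))]
  have hgab_nonneg : ∀ n, 0 ≤ gab n := fun n => abs_nonneg _
  have hgab_le : ∀ n : ℕ, gab n ≤ ((n : ℝ) / lam - 1) ^ 2 + 1 := by
    intro n
    nlinarith [hgab_sq n, hgab_nonneg n, sq_nonneg (gab n - 1)]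
  have hgab_int : Integrable (fun ω => gab (N ω)) ℙ := by
    refine Integrable.mono' (hvar_int.add (integrable_const 1))
      (((show Measurable fun n : ℕ => gab n by fun_prop).comp hNmeas).aestronglyMeasurable) ?_
    refine Filter.Eventually.of_forall fun ω => ?_
    simp only [Pi.add_apply]
    rw [Real.norm_eq_abs, abs_of_nonneg (hgab_nonneg _)]
    have := hgab_le (N ω)
    linarith
  -- bound on the mean absolute deviation
  have hgab_bound : ∫ ω, gab (N ω) ∂ℙ ≤ 1 / sl := by
    have hkey : ∀ ω, 2 * (1 / sl) * gab (N ω) ≤ ((N ω : ℝ) / lam - 1) ^ 2 + (1 / sl) ^ 2 := by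
      intro ω
      nlinarith [hgab_sq (N ω), sq_nonneg (gab (N ω) - 1 / sl)]
    have hmono := integral_mono (hgab_int.const_mul (2 * (1 / sl)))
      (hvar_int.add (integrable_const ((1 / sl) ^ 2))) hkey
    simp only [Pi.add_apply] at hmono
    rw [integral_const_mul, integral_add hvar_int (integrable_const _), hvar_val,
      integral_const] at hmono
    simp only [measure_univ, ENNReal.toReal_one, probReal_univ, smul_eq_mul, one_mul] at hmono
    have h1sl : (1 / sl) ^ 2 = 1 / lam := by
      rw [div_pow, one_pow, sq, hslsq]
    rw [h1sl] at hmono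
    have hfac : (0:ℝ) < 2 * (1 / sl) := by positivity
    have heq : 1 / lam + 1 / lam = 2 * (1 / sl) * (1 / sl) := by
      rw [← hslsq]; field_simp; ring
    rw [heq] at hmono
    exact le_of_mul_le_mul_left hmono hfac
  -- sqrt factor is integrable
  have hf_int : Integrable (fun ω => Real.sqrt ((N ω : ℝ) / lam)) ℙ := by
    refine Integrable.mono' (hgab_int.add (integrable_const 1))
      (((show Measurable fun n : ℕ => Real.sqrt ((n : ℝ) / lam) by fun_prop).comp
        hNmeas).aestronglyMeasurable) ?_
    refine Filter.Eventually.of_forall fun ω => ?_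
    simp only [Pi.add_apply]
    rw [Real.norm_eq_abs, abs_of_nonneg (Real.sqrt_nonneg _)]
    have := abs_sub_abs_le_abs_sub (Real.sqrt ((N ω : ℝ) / lam)) 1
    have h2 : |Real.sqrt ((N ω : ℝ) / lam)| = Real.sqrt ((N ω : ℝ) / lam) :=
      abs_of_nonneg (Real.sqrt_nonneg _)
    simp only [abs_one] at this
    rw [h2] at this
    linarith [this]
  -- ζ is integrable with known absolute moment
  have hζabs_int : Integrable (fun ω => |ζ ω|) ℙ := by
    have h1 : Integrable (fun x : ℝ => |x|) (Measure.map ζ ℙ) := by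
      rw [hζ]; exact gauss_abs_integrable
    exact (integrable_map_measure measurable_abs.aestronglyMeasurable hζmeas.aemeasurable).mp h1
  have hζabs_val : ∫ ω, |ζ ω| ∂ℙ = Real.sqrt (2 / π) := by
    rw [← gauss_abs_moment, ← hζ,
      integral_map hζmeas.aemeasurable (by fun_prop : Measurable fun x : ℝ => |x|).aestronglyMeasurable]
  have hζ_int : Integrable ζ ℙ := by
    refine (integrable_norm_iff hζmeas.aestronglyMeasurable).mp ?_
    simpa [Real.norm_eq_abs] using hζabs_int
  -- law of σ ζ
  have hBmap : Measure.map (fun ω => σ * ζ ω) ℙ = gaussianReal 0 ⟨σ ^ 2, sq_nonneg σ⟩ := by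
    have hcomp : Measure.map (fun ω => σ * ζ ω) ℙ
        = Measure.map (fun x => σ * x) (Measure.map ζ ℙ) :=
      (Measure.map_map (measurable_const_mul σ) hζmeas).symm
    rw [hcomp, hζ, gaussianReal_map_const_mul]
    simp
    rfl
  have hI2 : ∫ x, h x ∂(gaussianReal 0 ⟨σ ^ 2, sq_nonneg σ⟩) = ∫ ω, h (σ * ζ ω) ∂ℙ := by
    rw [← hBmap, integral_map (by fun_prop) hLip.continuous.aestronglyMeasurable]
  -- Lipschitz comparison
  have hlip_abs : ∀ a b : ℝ, |h a - h b| ≤ |a - b| := by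
    intro a b
    have := hLip.dist_le_mul a b
    simpa [Real.dist_eq] using this
  -- integrability of the compositions
  have hA_meas : Measurable (fun ω => σ * Real.sqrt ((N ω : ℝ) / lam) * ζ ω) :=
    ((measurable_const.mul ((by fun_prop : Measurable fun n : ℕ =>
      Real.sqrt ((n : ℝ) / lam)).comp hNmeas)).mul hζmeas)
  have hindep1 : IndepFun (fun ω => Real.sqrt ((N ω : ℝ) / lam)) ζ ℙ :=
    hindep.comp (show Measurable fun n : ℕ => Real.sqrt ((n : ℝ) / lam) by fun_prop)
      measurable_id
  have hfζ_int : Integrable (fun ω => Real.sqrt ((N ω : ℝ) / lam) * ζ ω) ℙ :=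
    hindep1.integrable_mul hf_int hζ_int
  have hA_int : Integrable (fun ω => σ * Real.sqrt ((N ω : ℝ) / lam) * ζ ω) ℙ := by
    have := hfζ_int.const_mul σ
    simpa [mul_assoc] using this
  have hB_int : Integrable (fun ω => σ * ζ ω) ℙ := hζ_int.const_mul σ
  have habs_bound : ∀ (u : Ω → ℝ), Integrable u ℙ → Measurable u →
      Integrable (fun ω => h (u ω)) ℙ := by
    intro u hu humeas
    refine Integrable.mono' ((integrable_const |h 0|).add hu.abs)
      (hLip.continuous.measurable.comp humeas).aestronglyMeasurable ?_
    refine Filter.Eventually.of_forall fun ω => ?_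
    simp only [Pi.add_apply]
    rw [Real.norm_eq_abs]
    have h1 := hlip_abs (u ω) 0
    have h2 : |h (u ω)| - |h 0| ≤ |h (u ω) - h 0| := abs_sub_abs_le_abs_sub _ _
    simp only [sub_zero] at h1
    linarith
  have hhA_int : Integrable (fun ω => h (σ * Real.sqrt ((N ω : ℝ) / lam) * ζ ω)) ℙ :=
    habs_bound _ hA_int hA_meas
  have hhB_int : Integrable (fun ω => h (σ * ζ ω)) ℙ :=
    habs_bound _ hB_int (measurable_const.mul hζmeas)
  -- independence for the product bound
  have hindep2 : IndepFun (fun ω => σ * gab (N ω)) (fun ω => |ζ ω|) ℙ :=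
    hindep.comp (by fun_prop : Measurable fun n : ℕ => σ * gab n) measurable_abs
  have hX_int : Integrable (fun ω => σ * gab (N ω)) ℙ := hgab_int.const_mul σ
  have hXY_int : Integrable (fun ω => σ * gab (N ω) * |ζ ω|) ℙ :=
    hindep2.integrable_mul hX_int hζabs_int
  have hXY_val : ∫ ω, σ * gab (N ω) * |ζ ω| ∂ℙ
      = σ * (∫ ω, gab (N ω) ∂ℙ) * Real.sqrt (2 / π) := by
    have := hindep2.integral_mul_eq_mul_integral hX_int.1 hζabs_int.1
    have h0 : (fun ω => σ * gab (N ω) * |ζ ω|)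
        = ((fun ω => σ * gab (N ω)) * fun ω => |ζ ω|) := rfl
    rw [h0, this, integral_const_mul, hζabs_val]
  -- main chain
  rw [hI2, ← integral_sub hhA_int hhB_int]
  have step1 : |∫ ω, (h (σ * Real.sqrt ((N ω : ℝ) / lam) * ζ ω) - h (σ * ζ ω)) ∂ℙ|
      ≤ ∫ ω, σ * gab (N ω) * |ζ ω| ∂ℙ := by
    have habsint : |∫ ω, (h (σ * Real.sqrt ((N ω : ℝ) / lam) * ζ ω) - h (σ * ζ ω)) ∂ℙ|
        ≤ ∫ ω, |h (σ * Real.sqrt ((N ω : ℝ) / lam) * ζ ω) - h (σ * ζ ω)| ∂ℙ := by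
      simpa [Real.norm_eq_abs] using norm_integral_le_integral_norm (μ := (ℙ : Measure Ω))
        (f := fun ω => h (σ * Real.sqrt ((N ω : ℝ) / lam) * ζ ω) - h (σ * ζ ω))
    refine habsint.trans ?_
    refine integral_mono (hhA_int.sub hhB_int).abs hXY_int fun ω => ?_
    have h1 := hlip_abs (σ * Real.sqrt ((N ω : ℝ) / lam) * ζ ω) (σ * ζ ω)
    have h2 : σ * Real.sqrt ((N ω : ℝ) / lam) * ζ ω - σ * ζ ω
        = σ * (Real.sqrt ((N ω : ℝ) / lam) - 1) * ζ ω := by ring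
    have h3 : |σ * (Real.sqrt ((N ω : ℝ) / lam) - 1) * ζ ω|
        = σ * gab (N ω) * |ζ ω| := by
      rw [abs_mul, abs_mul, abs_of_pos hσ]
    calc |h (σ * Real.sqrt ((N ω : ℝ) / lam) * ζ ω) - h (σ * ζ ω)|
        ≤ |σ * Real.sqrt ((N ω : ℝ) / lam) * ζ ω - σ * ζ ω| := h1
      _ = σ * gab (N ω) * |ζ ω| := by rw [h2, h3]
  refine step1.trans ?_
  rw [hXY_val]
  have hsq : (0:ℝ) ≤ Real.sqrt (2 / π) := Real.sqrt_nonneg _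
  have : σ * (∫ ω, gab (N ω) ∂ℙ) * Real.sqrt (2 / π) ≤ σ * (1 / sl) * Real.sqrt (2 / π) := by
    have := mul_le_mul_of_nonneg_left hgab_bound hσ.le
    exact mul_le_mul_of_nonneg_right this hsq
  refine this.trans (le_of_eq ?_)
  field_simp
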